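/- arXiv:2510.19315 — 3 statements merged into one kernel-verified Lean document; each statement's English description precedes it below -/
import Mathlib

section
/- For every finite alphabet Σ and every LTL formula φ over Σ (with strict since and strict until), there exists a nondeterministic finite automaton A with at most 2^{O(|φ|)} states such that A accepts exactly the finite words w with w,1 ⊨ φ. Consequently, if L(φ) is non-empty then φ is satisfied by some word of length at most 2^{O(|φ|)}. -/
/-- LTL formulas over alphabet `α`, with strict since and strict until. -/
inductive LTL (α : Type) : Type
  | tt : LTL α
  | ff : LTL α
  | atom : α → LTL α
  | not : LTL α → LTL α
  | and : LTL α → LTL α → LTL α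
  | or : LTL α → LTL α → LTL α
  | sinceOp : LTL α → LTL α → LTL α
  | untilOp : LTL α → LTL α → LTL α

/-- Satisfaction `w, i ⊨ φ` of an LTL formula on the finite word `w`
at the (1-based) position `i`. -/
def Sat {α : Type} (w : List α) : LTL α → ℕ → Prop
  | .tt, _ => True
  | .ff, _ => False
  | .atom a, i => w[i - 1]? = some a
  | .not φ, i => ¬ Sat w φ i
  | .and φ ψ, i => Sat w φ i ∧ Sat w ψ i
  | .or φ ψ, i => Sat w φ i ∨ Sat w ψ i
  | .sinceOp φ ψ, i =>
      ∃ j, 1 ≤ j ∧ j < i ∧ Sat w ψ j ∧ ∀ k, j < k → k < i → Sat w φ k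
  | .untilOp φ ψ, i =>
      ∃ j, i < j ∧ j ≤ w.length ∧ Sat w ψ j ∧ ∀ k, i < k → k < j → Sat w φ k

/-- Size of an LTL formula (number of subformula nodes). -/
def size {α : Type} : LTL α → ℕ
  | .tt => 1
  | .ff => 1
  | .atom _ => 1
  | .not φ => size φ + 1
  | .and φ ψ => size φ + size ψ + 1
  | .or φ ψ => size φ + size ψ + 1
  | .sinceOp φ ψ => size φ + size ψ + 1
  | .untilOp φ ψ => size φ + size ψ + 1

namespace LTLAux

variable {α : Type}

/-- The list of subformulas (with multiplicity) of an LTL formula. -/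
def subs : LTL α → List (LTL α)
  | .tt => [.tt]
  | .ff => [.ff]
  | .atom a => [.atom a]
  | .not φ => .not φ :: subs φ
  | .and φ ψ => .and φ ψ :: (subs φ ++ subs ψ)
  | .or φ ψ => .or φ ψ :: (subs φ ++ subs ψ)
  | .sinceOp φ ψ => .sinceOp φ ψ :: (subs φ ++ subs ψ)
  | .untilOp φ ψ => .untilOp φ ψ :: (subs φ ++ subs ψ)

lemma subs_length (φ : LTL α) : (subs φ).length = size φ := by
  induction φ <;> simp [subs, size, List.length_append, *]

lemma self_mem_subs (φ : LTL α) : φ ∈ subs φ := by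
  cases φ <;> simp [subs]

lemma subs_closed {φ ψ : LTL α} (h : ψ ∈ subs φ) : subs ψ ⊆ subs φ := by
  induction φ with
  | tt => simp [subs] at h; subst h; exact fun _ h => h
  | ff => simp [subs] at h; subst h; exact fun _ h => h
  | atom a => simp [subs] at h; subst h; exact fun _ h => h
  | not χ ih =>
    rw [subs, List.mem_cons] at h
    rcases h with h | h
    · subst h; exact fun _ h => h
    · exact fun x hx => List.mem_cons_of_mem _ (ih h hx)
  | and χ₁ χ₂ ih₁ ih₂ | or χ₁ χ₂ ih₁ ih₂ | sinceOp χ₁ χ₂ ih₁ ih₂ | untilOp χ₁ χ₂ ih₁ ih₂ =>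
    rw [subs, List.mem_cons] at h
    rcases h with h | h
    · subst h; exact fun _ h => h
    · rcases List.mem_append.mp h with h | h
      · exact fun x hx => List.mem_cons_of_mem _ (List.mem_append.mpr (Or.inl (ih₁ h hx)))
      · exact fun x hx => List.mem_cons_of_mem _ (List.mem_append.mpr (Or.inr (ih₂ h hx)))

/-- The subtype of subformulas of `φ`. -/
abbrev Sub (φ : LTL α) : Type := {ψ : LTL α // ψ ∈ subs φ}


variable {α : Type}

lemma sat_since_one (w : List α) (χ₁ χ₂ : LTL α) : ¬ Sat w (.sinceOp χ₁ χ₂) 1 := by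
  rintro ⟨j, h1, h2, -⟩; omega

lemma sat_since_succ (w : List α) (χ₁ χ₂ : LTL α) {i : ℕ} (hi : 1 ≤ i) :
    Sat w (.sinceOp χ₁ χ₂) (i + 1) ↔
      Sat w χ₂ i ∨ (Sat w χ₁ i ∧ Sat w (.sinceOp χ₁ χ₂) i) := by
  constructor
  · rintro ⟨j, hj1, hj2, hψ, hφ⟩
    rcases eq_or_lt_of_le (Nat.lt_succ_iff.mp hj2) with h | h
    · exact Or.inl (h ▸ hψ)
    · exact Or.inr ⟨hφ i h (Nat.lt_succ_self i),
        ⟨j, hj1, h, hψ, fun k hk1 hk2 => hφ k hk1 (by omega)⟩⟩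
  · rintro (hψ | ⟨hφ, j, hj1, hj2, hψ, hφ'⟩)
    · exact ⟨i, hi, Nat.lt_succ_self i, hψ, fun k h1 h2 => absurd h1 (by omega)⟩
    · refine ⟨j, hj1, by omega, hψ, fun k hk1 hk2 => ?_⟩
      rcases eq_or_lt_of_le (Nat.lt_succ_iff.mp hk2) with h | h
      · exact h ▸ hφ
      · exact hφ' k hk1 h

lemma sat_until_iff (w : List α) (χ₁ χ₂ : LTL α) (i : ℕ) :
    Sat w (.untilOp χ₁ χ₂) i ↔
      i < w.length ∧
        (Sat w χ₂ (i + 1) ∨ (Sat w χ₁ (i + 1) ∧ Sat w (.untilOp χ₁ χ₂) (i + 1))) := by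
  constructor
  · rintro ⟨j, hj1, hj2, hψ, hφ⟩
    refine ⟨by omega, ?_⟩
    rcases eq_or_lt_of_le (Nat.succ_le_of_lt hj1) with h | h
    · exact Or.inl (by rw [show i+1 = j by omega]; exact hψ)
    · exact Or.inr ⟨hφ (i + 1) (Nat.lt_succ_self i) h,
        ⟨j, h, hj2, hψ, fun k hk1 hk2 => hφ k (by omega) hk2⟩⟩
  · rintro ⟨hlen, hψ | ⟨hφ, j, hj1, hj2, hψ, hφ'⟩⟩
    · exact ⟨i + 1, Nat.lt_succ_self i, by omega, hψ, fun k h1 h2 => absurd h1 (by omega)⟩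
    · refine ⟨j, by omega, hj2, hψ, fun k hk1 hk2 => ?_⟩
      rcases eq_or_lt_of_le (Nat.succ_le_of_lt hk1) with h | h
      · exact h ▸ hφ
      · exact hφ' k h hk2
lemma sat_until_last (w : List α) (χ₁ χ₂ : LTL α) {i : ℕ} (hi : w.length ≤ i) :
    ¬ Sat w (.untilOp χ₁ χ₂) i := by
  rintro ⟨j, h1, h2, -⟩; omega

lemma mem_subs_not {χ φ : LTL α} (h : LTL.not χ ∈ subs φ) : χ ∈ subs φ :=
  subs_closed h (List.mem_cons_of_mem _ (self_mem_subs χ))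

lemma mem_subs_and_left {χ₁ χ₂ φ : LTL α} (h : LTL.and χ₁ χ₂ ∈ subs φ) : χ₁ ∈ subs φ :=
  subs_closed h (List.mem_cons_of_mem _ (List.mem_append.mpr (Or.inl (self_mem_subs χ₁))))
lemma mem_subs_and_right {χ₁ χ₂ φ : LTL α} (h : LTL.and χ₁ χ₂ ∈ subs φ) : χ₂ ∈ subs φ :=
  subs_closed h (List.mem_cons_of_mem _ (List.mem_append.mpr (Or.inr (self_mem_subs χ₂))))
lemma mem_subs_or_left {χ₁ χ₂ φ : LTL α} (h : LTL.or χ₁ χ₂ ∈ subs φ) : χ₁ ∈ subs φ :=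
  subs_closed h (List.mem_cons_of_mem _ (List.mem_append.mpr (Or.inl (self_mem_subs χ₁))))
lemma mem_subs_or_right {χ₁ χ₂ φ : LTL α} (h : LTL.or χ₁ χ₂ ∈ subs φ) : χ₂ ∈ subs φ :=
  subs_closed h (List.mem_cons_of_mem _ (List.mem_append.mpr (Or.inr (self_mem_subs χ₂))))
lemma mem_subs_since_left {χ₁ χ₂ φ : LTL α} (h : LTL.sinceOp χ₁ χ₂ ∈ subs φ) : χ₁ ∈ subs φ :=
  subs_closed h (List.mem_cons_of_mem _ (List.mem_append.mpr (Or.inl (self_mem_subs χ₁))))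
lemma mem_subs_since_right {χ₁ χ₂ φ : LTL α} (h : LTL.sinceOp χ₁ χ₂ ∈ subs φ) : χ₂ ∈ subs φ :=
  subs_closed h (List.mem_cons_of_mem _ (List.mem_append.mpr (Or.inr (self_mem_subs χ₂))))
lemma mem_subs_until_left {χ₁ χ₂ φ : LTL α} (h : LTL.untilOp χ₁ χ₂ ∈ subs φ) : χ₁ ∈ subs φ :=
  subs_closed h (List.mem_cons_of_mem _ (List.mem_append.mpr (Or.inl (self_mem_subs χ₁))))
lemma mem_subs_until_right {χ₁ χ₂ φ : LTL α} (h : LTL.untilOp χ₁ χ₂ ∈ subs φ) : χ₂ ∈ subs φ :=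
  subs_closed h (List.mem_cons_of_mem _ (List.mem_append.mpr (Or.inr (self_mem_subs χ₂))))

variable (φ : LTL α)

/-- Local consistency of a guessed valuation `v` at a position whose letter is `a`. -/
def loc (a : α) (v : Sub φ → Bool) : Prop :=
  (∀ (h : (LTL.tt : LTL α) ∈ subs φ), v ⟨.tt, h⟩ = true) ∧
  (∀ (h : (LTL.ff : LTL α) ∈ subs φ), v ⟨.ff, h⟩ = false) ∧
  (∀ b (h : (LTL.atom b : LTL α) ∈ subs φ), (v ⟨.atom b, h⟩ = true ↔ a = b)) ∧
  (∀ χ (h : LTL.not χ ∈ subs φ) (h' : χ ∈ subs φ), v ⟨.not χ, h⟩ = ! v ⟨χ, h'⟩) ∧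
  (∀ χ₁ χ₂ (h : LTL.and χ₁ χ₂ ∈ subs φ) (h₁ : χ₁ ∈ subs φ) (h₂ : χ₂ ∈ subs φ),
      v ⟨.and χ₁ χ₂, h⟩ = (v ⟨χ₁, h₁⟩ && v ⟨χ₂, h₂⟩)) ∧
  (∀ χ₁ χ₂ (h : LTL.or χ₁ χ₂ ∈ subs φ) (h₁ : χ₁ ∈ subs φ) (h₂ : χ₂ ∈ subs φ),
      v ⟨.or χ₁ χ₂, h⟩ = (v ⟨χ₁, h₁⟩ || v ⟨χ₂, h₂⟩))

/-- At position 1 all (strict) since formulas are false. -/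
def sinceInit (v : Sub φ → Bool) : Prop :=
  ∀ χ₁ χ₂ (h : LTL.sinceOp χ₁ χ₂ ∈ subs φ), v ⟨.sinceOp χ₁ χ₂, h⟩ = false

/-- Recurrence for since between consecutive positions. -/
def sinceLink (p v : Sub φ → Bool) : Prop :=
  ∀ χ₁ χ₂ (h : LTL.sinceOp χ₁ χ₂ ∈ subs φ) (h₁ : χ₁ ∈ subs φ) (h₂ : χ₂ ∈ subs φ),
    v ⟨.sinceOp χ₁ χ₂, h⟩ = (p ⟨χ₂, h₂⟩ || (p ⟨χ₁, h₁⟩ && p ⟨.sinceOp χ₁ χ₂, h⟩))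

/-- Recurrence for until between consecutive positions. -/
def untilLink (p v : Sub φ → Bool) : Prop :=
  ∀ χ₁ χ₂ (h : LTL.untilOp χ₁ χ₂ ∈ subs φ) (h₁ : χ₁ ∈ subs φ) (h₂ : χ₂ ∈ subs φ),
    p ⟨.untilOp χ₁ χ₂, h⟩ = (v ⟨χ₂, h₂⟩ || (v ⟨χ₁, h₁⟩ && v ⟨.untilOp χ₁ χ₂, h⟩))

/-- At the last position all (strict) until formulas are false. -/
def untilEnd (v : Sub φ → Bool) : Prop :=
  ∀ χ₁ χ₂ (h : LTL.untilOp χ₁ χ₂ ∈ subs φ), v ⟨.untilOp χ₁ χ₂, h⟩ = false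

/-- The valuation NFA for `φ`. -/
def aut : NFA α (Option (Sub φ → Bool)) where
  step q a :=
    match q with
    | none => {q' | ∃ v, q' = some v ∧ loc φ a v ∧ sinceInit φ v ∧
        v ⟨φ, self_mem_subs φ⟩ = true}
    | some p => {q' | ∃ v, q' = some v ∧ loc φ a v ∧ sinceLink φ p v ∧ untilLink φ p v}
  start := {none}
  accept := {q | (q = none ∧ Sat ([] : List α) φ 1) ∨ ∃ v, q = some v ∧ untilEnd φ v}

open Classical in
/-- The valuation of subformulas of `φ` given by actual truth on `w` at position `i`. -/
noncomputable def trueVal (w : List α) (i : ℕ) : Sub φ → Bool :=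
  fun ψ => decide (Sat w ψ.1 i)

lemma trueVal_iff (w : List α) (i : ℕ) (ψ : Sub φ) :
    trueVal φ w i ψ = true ↔ Sat w ψ.1 i := by
  simp [trueVal]

lemma loc_trueVal (w : List α) {i : ℕ} (hi : 1 ≤ i) {a : α}
    (ha : w[i - 1]? = some a) : loc φ a (trueVal φ w i) := by
  refine ⟨fun h => ?_, fun h => ?_, fun b h => ?_, fun χ h h' => ?_,
      fun χ₁ χ₂ h h₁ h₂ => ?_, fun χ₁ χ₂ h h₁ h₂ => ?_⟩
  · simp only [trueVal, decide_eq_true_eq]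
    exact trivial
  · simp only [trueVal, decide_eq_false_iff_not]
    exact id
  · rw [trueVal_iff]
    show w[i - 1]? = some b ↔ a = b
    rw [ha, Option.some_inj]
  · rw [Bool.eq_iff_iff]
    simp only [trueVal, decide_eq_true_eq, Bool.not_eq_true', decide_eq_false_iff_not, Bool.and_eq_true, Bool.or_eq_true]
    exact Iff.rfl
  · rw [Bool.eq_iff_iff]
    simp only [trueVal, decide_eq_true_eq, Bool.not_eq_true', decide_eq_false_iff_not, Bool.and_eq_true, Bool.or_eq_true]
    exact Iff.rfl
  · rw [Bool.eq_iff_iff]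
    simp only [trueVal, decide_eq_true_eq, Bool.not_eq_true', decide_eq_false_iff_not, Bool.and_eq_true, Bool.or_eq_true]
    exact Iff.rfl

lemma sinceInit_trueVal (w : List α) : sinceInit φ (trueVal φ w 1) := by
  intro χ₁ χ₂ h
  simp only [trueVal, decide_eq_false_iff_not]
  exact sat_since_one w χ₁ χ₂

lemma sinceLink_trueVal (w : List α) {i : ℕ} (hi : 1 ≤ i) :
    sinceLink φ (trueVal φ w i) (trueVal φ w (i + 1)) := by
  intro χ₁ χ₂ h h₁ h₂
  rw [Bool.eq_iff_iff]
  simp only [trueVal, decide_eq_true_eq, Bool.or_eq_true, Bool.and_eq_true]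
  exact sat_since_succ w χ₁ χ₂ hi

lemma untilLink_trueVal (w : List α) {i : ℕ} (hi : i < w.length) :
    untilLink φ (trueVal φ w i) (trueVal φ w (i + 1)) := by
  intro χ₁ χ₂ h h₁ h₂
  rw [Bool.eq_iff_iff]
  simp only [trueVal, decide_eq_true_eq, Bool.or_eq_true, Bool.and_eq_true]
  exact (sat_until_iff w χ₁ χ₂ i).trans (and_iff_right hi)

lemma untilEnd_trueVal (w : List α) {i : ℕ} (hi : w.length ≤ i) :
    untilEnd φ (trueVal φ w i) := by
  intro χ₁ χ₂ h
  simp only [trueVal, decide_eq_false_iff_not]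
  exact sat_until_last w χ₁ χ₂ hi


/-- Characterization of `evalFrom` membership via explicit runs. -/
lemma nfa_run_iff {β σ : Type*} (M : NFA β σ) (S : Set σ) (w : List β) (q : σ) :
    q ∈ M.evalFrom S w ↔
      ∃ r : ℕ → σ, r 0 ∈ S ∧
        (∀ i (h : i < w.length), r (i + 1) ∈ M.step (r i) w[i]) ∧ r w.length = q := by
  induction w generalizing S with
  | nil =>
    simp only [NFA.evalFrom_nil, List.length_nil]
    constructor
    · intro h; exact ⟨fun _ => q, h, by simp, rfl⟩
    · rintro ⟨r, h0, -, hend⟩; rwa [← hend]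
  | cons a w ih =>
    have hev : M.evalFrom S (a :: w) = M.evalFrom (M.stepSet S a) w := rfl
    rw [hev, ih]
    constructor
    · rintro ⟨r, h0, hstep, hend⟩
      rcases M.mem_stepSet.mp h0 with ⟨s, hs, hs2⟩
      refine ⟨fun i => Nat.rec s (fun i _ => r i) i, hs, ?_, hend⟩
      intro i hi
      cases i with
      | zero => exact hs2
      | succ i =>
        have hi' : i < w.length := by simpa using hi
        simpa using hstep i hi'
    · rintro ⟨r, h0, hstep, hend⟩
      refine ⟨fun i => r (i + 1), ?_, ?_, ?_⟩
      · exact M.mem_stepSet.mpr ⟨r 0, h0, by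
          have := hstep 0 (by simp)
          simpa using this⟩
      · intro i hi
        have h2 := hstep (i + 1) (by simpa using Nat.succ_lt_succ hi)
        simpa using h2
      · simpa using hend

/-- An NFA with a nonempty language accepts a word shorter than its number of states. -/
lemma nfa_short {β σ : Type*} [Fintype σ] (M : NFA β σ) {w : List β}
    (hw : w ∈ M.accepts) :
    ∃ w', w' ∈ M.accepts ∧ w'.length < Fintype.card σ := by
  have main : ∀ n (w : List β), w.length = n → w ∈ M.accepts →
      ∃ w', w' ∈ M.accepts ∧ w'.length < Fintype.card σ := by
    intro n
    induction n using Nat.strong_induction_on with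
    | _ n ihn =>
      intro w hwn hw
      by_cases hlen : w.length < Fintype.card σ
      · exact ⟨w, hw, hlen⟩
      · push_neg at hlen
        rcases NFA.mem_accepts.mp hw with ⟨q, hq, hev⟩
        rw [nfa_run_iff] at hev
        obtain ⟨r, hr0, hstep, hend⟩ := hev
        obtain ⟨x, y, hxy, hr⟩ := Fintype.exists_ne_map_eq_of_card_lt
          (fun i : Fin (w.length + 1) => r i) (by simp; omega)
        set aa := min x.1 y.1 with haa
        set bb := max x.1 y.1 with hbb
        have hab : aa < bb := by
          rcases lt_or_gt_of_ne (fun h => hxy (Fin.ext h)) with h | h <;> omega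
        have hbn : bb ≤ w.length := by
          have := x.2; have := y.2; omega
        have hrab : r aa = r bb := by
          rcases le_total x.1 y.1 with h | h
          · have h1 : aa = x.1 := by omega
            have h2 : bb = y.1 := by omega
            rw [h1, h2]; exact hr
          · have h1 : aa = y.1 := by omega
            have h2 : bb = x.1 := by omega
            rw [h1, h2]; exact hr.symm
        set w' := w.take aa ++ w.drop bb with hw'
        have hlen' : w'.length = aa + (w.length - bb) := by
          simp [hw', List.length_take, List.length_drop]
          omega
        have hshort : w'.length < w.length := by omega
        set r' : ℕ → σ := fun i => if i < aa then r i else r (i + (bb - aa)) with hr'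
        have hget? : ∀ i, (i < aa → w'[i]? = w[i]?) ∧
            (aa ≤ i → w'[i]? = w[i + (bb - aa)]?) := by
          intro i
          have hta : (w.take aa).length = aa := by
            simp [List.length_take]; omega
          constructor
          · intro hia
            rw [hw', List.getElem?_append_left (by omega),
              List.getElem?_take_of_lt hia]
          · intro hia
            rw [hw', List.getElem?_append_right (by omega), hta]
            simp only [List.getElem?_drop]
            congr 1
            omega
        have hget : ∀ i (h : i < w'.length),
            (∀ (hia : i < aa), w'[i] = w[i]'(by omega)) ∧
            (∀ (hia : aa ≤ i), w'[i] = w[i + (bb - aa)]'(by omega)) := by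
          intro i h
          constructor
          · intro hia
            have h2 := (hget? i).1 hia
            rw [List.getElem?_eq_getElem h, List.getElem?_eq_getElem (by omega)] at h2
            exact Option.some.inj h2
          · intro hia
            have h2 := (hget? i).2 hia
            rw [List.getElem?_eq_getElem h, List.getElem?_eq_getElem (by omega)] at h2
            exact Option.some.inj h2
        have hacc' : w' ∈ M.accepts := by
          rw [NFA.mem_accepts]
          refine ⟨q, hq, ?_⟩
          rw [nfa_run_iff]
          refine ⟨r', ?_, ?_, ?_⟩
          · by_cases h0 : 0 < aa
            · simpa [hr', h0] using hr0
            · have ha0 : aa = 0 := by omega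
              have : r' 0 = r bb := by simp [hr', ha0]
              rw [this, ← hrab, ha0]
              exact hr0
          · intro i hi
            by_cases hia : i + 1 ≤ aa
            · have h1 : r' i = r i := by simp [hr']; omega
              have h2 : r' (i + 1) = r (i + 1) := by
                by_cases h : i + 1 < aa
                · simp [hr', h]
                · have : i + 1 = aa := by omega
                  simp [hr', this]
                  rw [show aa + (bb - aa) = bb by omega, ← hrab]
              rw [h1, h2, (hget i hi).1 (by omega)]
              exact hstep i (by omega)
            · have h1 : r' i = r (i + (bb - aa)) := by simp [hr']; omega
              have h2 : r' (i + 1) = r (i + 1 + (bb - aa)) := by simp [hr']; omega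
              have hjn : i + (bb - aa) < w.length := by omega
              rw [h1, h2, (hget i hi).2 (by omega),
                show i + 1 + (bb - aa) = i + (bb - aa) + 1 by omega]
              exact hstep (i + (bb - aa)) hjn
          · have h1 : r' w'.length = r (w'.length + (bb - aa)) := by
              simp [hr']; omega
            rw [h1, show w'.length + (bb - aa) = w.length by omega]
            exact hend
        exact ihn w'.length (by omega) w' rfl hacc'
  exact main w.length w rfl hw

lemma mem_step_none (φ : LTL α) (a : α) (q' : Option (Sub φ → Bool)) :
    q' ∈ (aut φ).step none a ↔ ∃ v, q' = some v ∧ loc φ a v ∧ sinceInit φ v ∧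
      v ⟨φ, self_mem_subs φ⟩ = true := Iff.rfl

lemma mem_step_some (φ : LTL α) (p : Sub φ → Bool) (a : α) (q' : Option (Sub φ → Bool)) :
    q' ∈ (aut φ).step (some p) a ↔ ∃ v, q' = some v ∧ loc φ a v ∧ sinceLink φ p v ∧
      untilLink φ p v := Iff.rfl

lemma accepts_iff (φ : LTL α) (w : List α) :
    w ∈ (aut φ).accepts ↔ Sat w φ 1 := by
  rw [NFA.mem_accepts]
  constructor
  · rintro ⟨q, hq, hev⟩
    rw [nfa_run_iff] at hev
    obtain ⟨r, hr0, hstep, hend⟩ := hev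
    have hr0' : r 0 = none := hr0
    rcases Nat.eq_zero_or_pos w.length with hn | hn
    · have hw : w = [] := List.length_eq_zero_iff.mp hn
      subst hw
      have hqn : q = none := by rw [← hend]; exact hr0'
      rcases hq with ⟨-, hsat⟩ | ⟨u, hqu, -⟩
      · exact hsat
      · rw [hqn] at hqu; exact absurd hqu (by simp)
    · set v : ℕ → (Sub φ → Bool) := fun i => (r i).getD (fun _ => false) with hv
      have hsome : ∀ i, 1 ≤ i → i ≤ w.length → r i = some (v i) := by
        intro i h1 h2
        have hs := hstep (i - 1) (by omega)
        rw [Nat.sub_add_cancel h1] at hs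
        have hex : ∃ u, r i = some u := by
          cases hrr : r (i - 1) with
          | none => rw [hrr, mem_step_none] at hs; obtain ⟨u, hu, -⟩ := hs; exact ⟨u, hu⟩
          | some p => rw [hrr, mem_step_some] at hs; obtain ⟨u, hu, -⟩ := hs; exact ⟨u, hu⟩
        obtain ⟨u, hu⟩ := hex
        rw [hv]; simp [hu]
      have hinit := hstep 0 hn
      rw [hr0', mem_step_none] at hinit
      obtain ⟨u, hu, hloc1, hsinit1, htop1⟩ := hinit
      have hu1 : u = v 1 := by
        have h2 := hsome 1 le_rfl hn
        rw [hu] at h2; exact Option.some.inj h2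
      rw [hu1] at hloc1 hsinit1 htop1
      have hlink : ∀ i, 1 ≤ i → ∀ (h : i < w.length),
          loc φ (w[i]'h) (v (i + 1)) ∧ sinceLink φ (v i) (v (i + 1)) ∧
            untilLink φ (v i) (v (i + 1)) := by
        intro i h1 h
        have hs := hstep i h
        rw [hsome i h1 (le_of_lt h), mem_step_some] at hs
        obtain ⟨u, hu, hl, hsl, hul⟩ := hs
        have huv : u = v (i + 1) := by
          have h2 := hsome (i + 1) (by omega) (by omega)
          rw [hu] at h2; exact Option.some.inj h2
        rw [huv] at hl hsl hul
        exact ⟨hl, hsl, hul⟩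
      have huend : untilEnd φ (v w.length) := by
        have hrn := hsome w.length hn le_rfl
        rcases hq with ⟨hqn, -⟩ | ⟨u, hqu, hue⟩
        · rw [← hend, hrn] at hqn; exact absurd hqn (by simp)
        · rw [← hend, hrn] at hqu
          rwa [← Option.some.inj hqu] at hue
      have hloc : ∀ i, ∀ (h1 : 1 ≤ i) (h2 : i ≤ w.length),
          loc φ (w[i - 1]'(by omega)) (v i) := by
        intro i h1 h2
        rcases eq_or_lt_of_le h1 with hone | hone
        · have hi1 : i = 1 := hone.symm
          subst hi1
          simpa using hloc1
        · have hres := (hlink (i - 1) (by omega) (by omega)).1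
          rw [Nat.sub_add_cancel h1] at hres
          exact hres
      have core : ∀ (ψ : LTL α) (hψ : ψ ∈ subs φ), ∀ i, 1 ≤ i → i ≤ w.length →
          ((v i) ⟨ψ, hψ⟩ = true ↔ Sat w ψ i) := by
        intro ψ
        induction ψ with
        | tt =>
          intro h i h1 h2
          rw [(hloc i h1 h2).1 h]
          simp [Sat]
        | ff =>
          intro h i h1 h2
          rw [(hloc i h1 h2).2.1 h]
          simp [Sat]
        | atom b =>
          intro h i h1 h2
          rw [(hloc i h1 h2).2.2.1 b h]
          show _ ↔ w[i - 1]? = some b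
          rw [List.getElem?_eq_getElem (by omega : i - 1 < w.length),
            Option.some_inj]
        | not χ ih =>
          intro h i h1 h2
          have hχ := mem_subs_not h
          rw [(hloc i h1 h2).2.2.2.1 χ h hχ]
          show _ ↔ ¬ Sat w χ i
          rw [← ih hχ i h1 h2]
          simp
        | and χ₁ χ₂ ih₁ ih₂ =>
          intro h i h1 h2
          rw [(hloc i h1 h2).2.2.2.2.1 χ₁ χ₂ h (mem_subs_and_left h) (mem_subs_and_right h)]
          show _ ↔ Sat w χ₁ i ∧ Sat w χ₂ i
          rw [← ih₁ (mem_subs_and_left h) i h1 h2, ← ih₂ (mem_subs_and_right h) i h1 h2]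
          simp
        | or χ₁ χ₂ ih₁ ih₂ =>
          intro h i h1 h2
          rw [(hloc i h1 h2).2.2.2.2.2 χ₁ χ₂ h (mem_subs_or_left h) (mem_subs_or_right h)]
          show _ ↔ Sat w χ₁ i ∨ Sat w χ₂ i
          rw [← ih₁ (mem_subs_or_left h) i h1 h2, ← ih₂ (mem_subs_or_right h) i h1 h2]
          simp
        | sinceOp χ₁ χ₂ ih₁ ih₂ =>
          intro h i h1
          induction i, h1 using Nat.le_induction with
          | base =>
            intro h2
            rw [hsinit1 χ₁ χ₂ h]
            simp only [Bool.false_eq_true, false_iff]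
            exact sat_since_one w χ₁ χ₂
          | succ i hi ihp =>
            intro h2
            have hχ₁ := mem_subs_since_left h
            have hχ₂ := mem_subs_since_right h
            rw [(hlink i hi (by omega)).2.1 χ₁ χ₂ h hχ₁ hχ₂,
              sat_since_succ w χ₁ χ₂ hi]
            simp only [Bool.or_eq_true, Bool.and_eq_true]
            rw [ih₁ hχ₁ i hi (by omega), ih₂ hχ₂ i hi (by omega), ihp (by omega)]
        | untilOp χ₁ χ₂ ih₁ ih₂ =>
          intro h i h1 h2
          have hχ₁ := mem_subs_until_left h
          have hχ₂ := mem_subs_until_right h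
          have main : ∀ d i, 1 ≤ i → i ≤ w.length → w.length - i ≤ d →
              ((v i) ⟨.untilOp χ₁ χ₂, h⟩ = true ↔ Sat w (.untilOp χ₁ χ₂) i) := by
            intro d
            induction d with
            | zero =>
              intro i h1 h2 hd
              have hin : i = w.length := by omega
              rw [hin, huend χ₁ χ₂ h]
              simp only [Bool.false_eq_true, false_iff]
              exact sat_until_last w χ₁ χ₂ le_rfl
            | succ d ihd =>
              intro i h1 h2 hd
              by_cases hin : i = w.length
              · rw [hin, huend χ₁ χ₂ h]
                simp only [Bool.false_eq_true, false_iff]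
                exact sat_until_last w χ₁ χ₂ le_rfl
              · have hlt : i < w.length := by omega
                rw [(hlink i h1 hlt).2.2 χ₁ χ₂ h hχ₁ hχ₂,
                  sat_until_iff w χ₁ χ₂ i]
                simp only [Bool.or_eq_true, Bool.and_eq_true]
                rw [ih₁ hχ₁ (i + 1) (by omega) (by omega),
                  ih₂ hχ₂ (i + 1) (by omega) (by omega),
                  ihd (i + 1) (by omega) (by omega) (by omega)]
                constructor
                · intro hx; exact ⟨hlt, hx⟩
                · rintro ⟨-, hx⟩; exact hx
          exact main (w.length - i) i h1 h2 le_rfl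
      exact (core φ (self_mem_subs φ) 1 le_rfl hn).mp htop1
  · intro hsat
    rcases Nat.eq_zero_or_pos w.length with hn | hn
    · have hw : w = [] := List.length_eq_zero_iff.mp hn
      subst hw
      refine ⟨none, Or.inl ⟨rfl, hsat⟩, ?_⟩
      rw [nfa_run_iff]
      exact ⟨fun _ => none, rfl, by simp, rfl⟩
    · refine ⟨some (trueVal φ w w.length), Or.inr ⟨_, rfl, untilEnd_trueVal φ w le_rfl⟩, ?_⟩
      rw [nfa_run_iff]
      refine ⟨fun i => if i = 0 then none else some (trueVal φ w i), by simp; rfl, ?_, ?_⟩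
      · intro i hi
        by_cases hi0 : i = 0
        · subst hi0
          norm_num
          rw [mem_step_none]
          refine ⟨trueVal φ w 1, rfl, ?_, sinceInit_trueVal φ w, ?_⟩
          · refine loc_trueVal φ w le_rfl ?_
            show w[0]? = some (w[0]'hi)
            rw [List.getElem?_eq_getElem hi]
          · simp only [trueVal, decide_eq_true_eq]
            exact hsat
        · have h1 : 1 ≤ i := by omega
          simp only [if_neg hi0, if_neg (by omega : ¬ i + 1 = 0)]
          rw [mem_step_some]
          refine ⟨trueVal φ w (i + 1), rfl, ?_, sinceLink_trueVal φ w h1,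
            untilLink_trueVal φ w hi⟩
          refine loc_trueVal φ w (by omega) ?_
          show w[i + 1 - 1]? = some (w[i]'hi)
          rw [show i + 1 - 1 = i from rfl,
            List.getElem?_eq_getElem hi]
      · have hne : w.length ≠ 0 := by omega
        simp [hne]

lemma one_le_size (φ : LTL α) : 1 ≤ size φ := by
  cases φ <;> simp [size]

end LTLAux

open LTLAux

/-- For every LTL formula `φ` there is an NFA with at most `2^{O(|φ|)}`
states recognizing exactly the words satisfying `φ` at position 1;
consequently, a satisfiable formula has a model of length at most
`2^{O(|φ|)}`. -/
theorem ltl_to_nfa_small_model :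
    ∃ c : ℕ, ∀ (α : Type) (φ : LTL α),
      (∃ (σ : Type) (_ : Fintype σ) (A : NFA α σ),
        Fintype.card σ ≤ 2 ^ (c * size φ) ∧
        ∀ w : List α, w ∈ A.accepts ↔ Sat w φ 1) ∧
      ((∃ w : List α, Sat w φ 1) →
        ∃ w : List α, Sat w φ 1 ∧ w.length ≤ 2 ^ (c * size φ)) := by
  classical
  refine ⟨2, fun α φ => ?_⟩
  letI : DecidableEq (LTL α) := Classical.decEq _
  letI instF : Fintype (Sub φ) := List.Subtype.fintype (subs φ)
  have hcardSub : Fintype.card (Sub φ) ≤ size φ := by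
    have hinj : Function.Injective
        (fun x : Sub φ => (⟨(subs φ).idxOf x.1,
          List.idxOf_lt_length_iff.mpr x.2⟩ : Fin (subs φ).length)) := by
      intro x y hxy
      apply Subtype.ext
      have h2 := Fin.mk.inj_iff.mp hxy
      exact (List.idxOf_inj x.2).mp h2
    calc Fintype.card (Sub φ) ≤ Fintype.card (Fin (subs φ).length) :=
          Fintype.card_le_of_injective _ hinj
      _ = (subs φ).length := Fintype.card_fin _
      _ = size φ := subs_length φ
  have hcard : Fintype.card (Option (Sub φ → Bool)) ≤ 2 ^ (2 * size φ) := by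
    rw [Fintype.card_option, Fintype.card_fun, Fintype.card_bool]
    calc 2 ^ Fintype.card (Sub φ) + 1 ≤ 2 ^ size φ + 2 ^ size φ := by
          have h1 : (2:ℕ) ^ Fintype.card (Sub φ) ≤ 2 ^ size φ :=
            Nat.pow_le_pow_right (by norm_num) hcardSub
          have h2 : (1:ℕ) ≤ 2 ^ size φ := Nat.one_le_two_pow
          omega
      _ = 2 ^ (size φ + 1) := by ring
      _ ≤ 2 ^ (2 * size φ) := Nat.pow_le_pow_right (by norm_num)
          (by have := one_le_size φ; omega)
  constructor
  · exact ⟨Option (Sub φ → Bool), inferInstance, aut φ, hcard, accepts_iff φ⟩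
  · rintro ⟨w, hw⟩
    have hacc : w ∈ (aut φ).accepts := (accepts_iff φ w).mpr hw
    obtain ⟨w', hw', hlen⟩ := nfa_short (aut φ) hacc
    exact ⟨w', (accepts_iff φ w').mp hw', by omega⟩
end

section
/- Let w = a₁⋯aₙ be a finite word and φ₁, φ₂ LTL formulas. Then w,i ⊨ φ₁ S φ₂ holds if and only if there exists j with 1 ≤ j < i such that w,j ⊨ ¬φ₁ ∨ φ₂, and for the maximal such j one has w,j ⊨ φ₂. -/
/-- Correctness of simulating strict `since` by a rightmost
(strictly-future-masked) unique-hard-attention layer: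
`w,i ⊨ φ₁ S φ₂` iff there is a position `1 ≤ j < i` where `¬φ₁ ∨ φ₂`
holds, and at the maximal such `j` the formula `φ₂` holds. -/
theorem since_via_rightmost (α : Type) (φ₁ φ₂ : LTL α) (w : List α) (i : ℕ)
    (hi : 1 ≤ i) (hin : i ≤ w.length) :
    Sat w (LTL.sinceOp φ₁ φ₂) i ↔
      ∃ j, (1 ≤ j ∧ j < i ∧ Sat w (LTL.or (LTL.not φ₁) φ₂) j ∧
          ∀ k, 1 ≤ k → k < i → Sat w (LTL.or (LTL.not φ₁) φ₂) k → k ≤ j) ∧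
        Sat w φ₂ j := by
  classical
  constructor
  · rintro ⟨j, hj1, hji, hjψ, hjφ⟩
    set P : ℕ → Prop := fun k => 1 ≤ k ∧ Sat w (LTL.or (LTL.not φ₁) φ₂) k with hP
    have hdec : DecidablePred P := Classical.decPred P
    set m := Nat.findGreatest P (i - 1) with hm
    have hPj : P j := ⟨hj1, Or.inr hjψ⟩
    have hjm : j ≤ m := Nat.le_findGreatest (by omega) hPj
    have hm1 : 1 ≤ m := le_trans hj1 hjm
    have hPm : P m := Nat.findGreatest_spec (by omega) hPj
    have hmi : m < i := by
      have := Nat.findGreatest_le (P := P) (i - 1)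
      omega
    have hmax : ∀ k, 1 ≤ k → k < i → Sat w (LTL.or (LTL.not φ₁) φ₂) k → k ≤ m := by
      intro k hk1 hki hks
      by_contra h
      exact Nat.findGreatest_is_greatest (P := P) (n := i - 1) (by omega) (by omega) ⟨hk1, hks⟩
    refine ⟨m, ⟨hm1, hmi, hPm.2, hmax⟩, ?_⟩
    rcases eq_or_lt_of_le hjm with h | h
    · exact h ▸ hjψ
    · rcases hPm.2 with hnot | hψ
      · exact absurd (hjφ m h hmi) hnot
      · exact hψ
  · rintro ⟨j, ⟨hj1, hji, _, hmax⟩, hjψ⟩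
    refine ⟨j, hj1, hji, hjψ, fun k hjk hki => ?_⟩
    by_contra h
    have := hmax k (by omega) hki (Or.inl h)
    omega
end

section
/- Let w = a₁⋯aₙ be a finite word and φ₁, φ₂ LTL formulas. Then w,i ⊨ φ₁ U φ₂ (strict until) holds if and only if there exists j with i < j ≤ n such that w,j ⊨ ¬φ₁ ∨ φ₂, and for the minimal such j one has w,j ⊨ φ₂. -/
/-- Correctness of simulating strict `until` by a leftmost
(strictly-past-masked) unique-hard-attention layer:
`w,i ⊨ φ₁ U φ₂` iff there is a position `i < j ≤ |w|` where `¬φ₁ ∨ φ₂`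
holds, and at the minimal such `j` the formula `φ₂` holds. -/
theorem until_via_leftmost (α : Type) (φ₁ φ₂ : LTL α) (w : List α) (i : ℕ)
    (hi : 1 ≤ i) (hin : i ≤ w.length) :
    Sat w (LTL.untilOp φ₁ φ₂) i ↔
      ∃ j, (i < j ∧ j ≤ w.length ∧ Sat w (LTL.or (LTL.not φ₁) φ₂) j ∧
          ∀ k, i < k → k ≤ w.length → Sat w (LTL.or (LTL.not φ₁) φ₂) k → j ≤ k) ∧
        Sat w φ₂ j := by
  classical
  simp only [Sat] at *
  constructor
  · rintro ⟨j, hij, hjn, hψ, hφ⟩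
    have hP : ∃ m, i < m ∧ m ≤ w.length ∧ (¬ Sat w φ₁ m ∨ Sat w φ₂ m) :=
      ⟨j, hij, hjn, Or.inr hψ⟩
    set m := Nat.find hP with hm
    obtain ⟨him, hmn, hor⟩ := Nat.find_spec hP
    have hmin : ∀ k, i < k → k ≤ w.length → (¬ Sat w φ₁ k ∨ Sat w φ₂ k) → m ≤ k := by
      intro k h1 h2 h3
      exact Nat.find_le ⟨h1, h2, h3⟩
    have hmj : m ≤ j := hmin j hij hjn (Or.inr hψ)
    rcases eq_or_lt_of_le hmj with h | h
    · exact ⟨m, ⟨him, hmn, hor, hmin⟩, h ▸ hψ⟩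
    · have hφm : Sat w φ₁ m := hφ m him h
      rcases hor with h' | h'
      · exact absurd hφm h'
      · exact ⟨m, ⟨him, hmn, Or.inr h', hmin⟩, h'⟩
  · rintro ⟨j, ⟨hij, hjn, _, hmin⟩, hψ⟩
    refine ⟨j, hij, hjn, hψ, ?_⟩
    intro k hik hkj
    by_contra hk
    exact absurd (hmin k hik (le_of_lt (lt_of_lt_of_le hkj hjn)) (Or.inl hk)) (Nat.not_le.mpr hkj)
end
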